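/- Let (Φ(t))_{t∈ℕ} be matrices satisfying: each |Φ(t)| is super-stochastic with all row sums at most l and diagonal entries at least σ, where 0 < σ ≤ 1 ≤ l. Suppose there exist a period T and a constant bound such that ‖|Φ(γT+T−1)|···|Φ(γT)|‖_∞ ≤ l^T − σ^T for all γ ∈ ℕ, and l^T − σ^T < 1. Then the left infinite product Φ(t)···Φ(0) converges to the zero matrix. -/
import Mathlib

open Filter Topology

/-- Left partial products: `lprod Φ t = Φ(t−1) ⋯ Φ(1) Φ(0)` (and `lprod Φ 0 = I`). -/
def lprod {n : ℕ} (Φ : ℕ → Matrix (Fin n) (Fin n) ℝ) : ℕ → Matrix (Fin n) (Fin n) ℝ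
  | 0 => 1
  | t + 1 => Φ t * lprod Φ t

/-- Entrywise absolute value of a matrix. -/
def aabs {n : ℕ} (A : Matrix (Fin n) (Fin n) ℝ) : Matrix (Fin n) (Fin n) ℝ :=
  Matrix.of fun i j => |A i j|

/-- Infinity norm: maximum (absolute) row sum. -/
noncomputable def infNorm {n : ℕ} (A : Matrix (Fin n) (Fin n) ℝ) : ℝ :=
  ⨆ i : Fin n, ∑ j, |A i j|

/- auxiliary lemmas -/

lemma lprod_nonneg {n : ℕ} (B : ℕ → Matrix (Fin n) (Fin n) ℝ)
    (hB : ∀ s i j, 0 ≤ B s i j) : ∀ t i j, 0 ≤ lprod B t i j := by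
  intro t
  induction t with
  | zero =>
    intro i j
    by_cases h : i = j <;> simp [lprod, Matrix.one_apply, h]
  | succ t ih =>
    intro i j
    show 0 ≤ (B t * lprod B t) i j
    rw [Matrix.mul_apply]
    exact Finset.sum_nonneg fun k _ => mul_nonneg (hB t i k) (ih k j)

lemma lprod_abs_le {n : ℕ} (Φ : ℕ → Matrix (Fin n) (Fin n) ℝ) :
    ∀ t i j, |lprod Φ t i j| ≤ lprod (fun s => aabs (Φ s)) t i j := by
  intro t
  induction t with
  | zero =>
    intro i j
    by_cases h : i = j <;> simp [lprod, Matrix.one_apply, h]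
  | succ t ih =>
    intro i j
    show |(Φ t * lprod Φ t) i j| ≤ (aabs (Φ t) * lprod (fun s => aabs (Φ s)) t) i j
    rw [Matrix.mul_apply, Matrix.mul_apply]
    refine (Finset.abs_sum_le_sum_abs _ _).trans (Finset.sum_le_sum fun k _ => ?_)
    rw [abs_mul]
    exact mul_le_mul_of_nonneg_left (ih k j) (abs_nonneg _)

lemma lprod_split {n : ℕ} (A : ℕ → Matrix (Fin n) (Fin n) ℝ) (a b : ℕ) :
    lprod A (a + b) = lprod (fun s => A (b + s)) a * lprod A b := by
  induction a with
  | zero => simp [lprod]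
  | succ a ih =>
    have h1 : a + 1 + b = (a + b) + 1 := by omega
    rw [h1]
    show A (a + b) * lprod A (a + b) = _
    rw [ih]
    have : lprod (fun s => A (b + s)) (a + 1) =
        A (b + a) * lprod (fun s => A (b + s)) a := rfl
    rw [this, Nat.add_comm b a, Matrix.mul_assoc]

lemma rowsum_mul_le {n : ℕ} (A C : Matrix (Fin n) (Fin n) ℝ) (a c : ℝ)
    (hA : ∀ i, ∑ j, |A i j| ≤ a) (hC : ∀ k, ∑ j, |C k j| ≤ c) (hc : 0 ≤ c) :
    ∀ i, ∑ j, |(A * C) i j| ≤ a * c := by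
  intro i
  have h1 : ∑ j, |(A * C) i j| ≤ ∑ j, ∑ k, |A i k| * |C k j| := by
    refine Finset.sum_le_sum fun j _ => ?_
    rw [Matrix.mul_apply]
    refine (Finset.abs_sum_le_sum_abs _ _).trans (Finset.sum_le_sum fun k _ => ?_)
    rw [abs_mul]
  rw [Finset.sum_comm] at h1
  have h2 : ∑ k, ∑ j, |A i k| * |C k j| = ∑ k, |A i k| * ∑ j, |C k j| := by
    simp [Finset.mul_sum]
  rw [h2] at h1
  refine h1.trans ?_
  have h3 : ∑ k, |A i k| * ∑ j, |C k j| ≤ ∑ k, |A i k| * c :=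
    Finset.sum_le_sum fun k _ => mul_le_mul_of_nonneg_left (hC k) (abs_nonneg _)
  refine h3.trans ?_
  rw [← Finset.sum_mul]
  exact mul_le_mul_of_nonneg_right (hA i) hc

lemma rowsum_lprod_le {n : ℕ} (A : ℕ → Matrix (Fin n) (Fin n) ℝ) (l : ℝ) (hl : 1 ≤ l)
    (hA : ∀ s i, ∑ j, |A s i j| ≤ l) : ∀ m i, ∑ j, |(lprod A m) i j| ≤ l ^ m := by
  intro m
  induction m with
  | zero =>
    intro i
    have : ∑ j, |(lprod A 0) i j| = 1 := by
      simp [lprod, Matrix.one_apply, apply_ite abs, Finset.sum_ite_eq]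
    rw [this]; simp
  | succ m ih =>
    intro i
    show ∑ j, |(A m * lprod A m) i j| ≤ l ^ (m + 1)
    have := rowsum_mul_le (A m) (lprod A m) l (l ^ m) (hA m) ih
      (pow_nonneg (le_trans zero_le_one hl) m) i
    calc ∑ j, |(A m * lprod A m) i j| ≤ l * l ^ m := this
      _ = l ^ (m + 1) := by ring

lemma rowsum_le_infNorm {n : ℕ} (A : Matrix (Fin n) (Fin n) ℝ) (i : Fin n) :
    ∑ j, |A i j| ≤ infNorm A := by
  unfold infNorm
  exact le_ciSup (f := fun i => ∑ j, |A i j|) (Set.Finite.bddAbove (Set.finite_range _)) i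

/-- Suppose each `|Φ(t)|` is super-stochastic (some rows have
sum < 1, the others ≥ 1) with all row sums at most `l` and diagonal entries at
least `σ`, where `0 < σ ≤ 1 ≤ l`. If for a period `T` all blockwise products
of the `|Φ(t)|` satisfy `‖·‖_∞ ≤ l^T − σ^T < 1`, then the infinite left
product `Φ(t)⋯Φ(0)` converges entrywise to zero. -/
theorem superstochastic_infinite_product_zero {n : ℕ}
    (Φ : ℕ → Matrix (Fin n) (Fin n) ℝ) (σ l : ℝ)
    (hσ0 : 0 < σ) (hσ1 : σ ≤ 1) (hl : 1 ≤ l)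
    (hsuper : ∀ t, ∃ W : Finset (Fin n),
      (∀ i ∈ W, ∑ j, |Φ t i j| < 1) ∧ (∀ i ∉ W, 1 ≤ ∑ j, |Φ t i j|))
    (hrows : ∀ t, ∀ i, ∑ j, |Φ t i j| ≤ l)
    (hdiag : ∀ t, ∀ i, σ ≤ |Φ t i i|)
    (T : ℕ) (hT : 0 < T)
    (hblock : ∀ γ : ℕ,
      infNorm (lprod (fun s => aabs (Φ (γ * T + s))) T) ≤ l ^ T - σ ^ T)
    (hlt : l ^ T - σ ^ T < 1) :
    ∀ i j : Fin n, Tendsto (fun t => lprod Φ t i j) atTop (𝓝 0) := by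
  intro i j
  set q : ℝ := l ^ T - σ ^ T with hq
  have hl0 : (0:ℝ) ≤ l := le_trans zero_le_one hl
  have hq0 : 0 ≤ q := by
    have h1 : σ ^ T ≤ 1 := pow_le_one₀ hσ0.le hσ1
    have h2 : (1:ℝ) ≤ l ^ T := one_le_pow₀ hl
    simp [hq]; linarith
  set B : ℕ → Matrix (Fin n) (Fin n) ℝ := fun s => aabs (Φ s) with hBdef
  have hBnn : ∀ s i j, 0 ≤ B s i j := fun s i j => abs_nonneg _
  have hBabs : ∀ s i j, |B s i j| = |Φ s i j| := fun s i j => abs_abs _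
  have hBrows : ∀ s i, ∑ j, |B s i j| ≤ l := by
    intro s i; simp only [hBabs]; exact hrows s i
  -- rowsums of block products are ≤ q
  have hblockrow : ∀ γ i, ∑ j, |(lprod (fun s => B (γ * T + s)) T) i j| ≤ q :=
    fun γ i => (rowsum_le_infNorm _ i).trans (hblock γ)
  -- rowsums of lprod B (T * γ) ≤ q ^ γ
  have hγ : ∀ γ i, ∑ j, |(lprod B (T * γ)) i j| ≤ q ^ γ := by
    intro γ
    induction γ with
    | zero =>
      intro i
      have : ∑ j, |(lprod B 0) i j| = 1 := by
        simp [lprod, Matrix.one_apply, apply_ite abs, Finset.sum_ite_eq]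
      simp [this]
    | succ γ ih =>
      intro i
      have hsplit : lprod B (T * (γ + 1)) =
          lprod (fun s => B (T * γ + s)) T * lprod B (T * γ) := by
        have : T * (γ + 1) = T + T * γ := by ring
        rw [this, lprod_split]
      rw [hsplit]
      have hb : ∀ i, ∑ j, |(lprod (fun s => B (T * γ + s)) T) i j| ≤ q := by
        intro i
        have := hblockrow γ i
        simpa [Nat.mul_comm] using this
      have := rowsum_mul_le _ _ q (q ^ γ) hb ih (pow_nonneg hq0 γ) i
      calc ∑ j, |(lprod (fun s => B (T * γ + s)) T * lprod B (T * γ)) i j|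
          ≤ q * q ^ γ := this
        _ = q ^ (γ + 1) := by ring
  -- full bound: |lprod Φ t i j| ≤ l^T * q^(t/T)
  have hbound : ∀ t, |lprod Φ t i j| ≤ l ^ T * q ^ (t / T) := by
    intro t
    have hdecomp : t = t % T + T * (t / T) := (Nat.mod_add_div t T).symm
    have hsplit : lprod B t =
        lprod (fun s => B (T * (t / T) + s)) (t % T) * lprod B (T * (t / T)) := by
      conv_lhs => rw [hdecomp]
      exact lprod_split B (t % T) (T * (t / T))
    have hrem : ∀ i, ∑ j, |(lprod (fun s => B (T * (t / T) + s)) (t % T)) i j|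
        ≤ l ^ (t % T) :=
      rowsum_lprod_le _ l hl (fun s i => hBrows _ i) (t % T)
    have hrow : ∑ j, |(lprod B t) i j| ≤ l ^ (t % T) * q ^ (t / T) := by
      rw [hsplit]
      exact rowsum_mul_le _ _ _ _ hrem (hγ (t / T)) (pow_nonneg hq0 _) i
    have hentry : |lprod Φ t i j| ≤ ∑ j', |(lprod B t) i j'| := by
      refine (lprod_abs_le Φ t i j).trans ?_
      have h1 : lprod B t i j ≤ |lprod B t i j| := le_abs_self _
      refine h1.trans ?_
      exact Finset.single_le_sum (f := fun j' => |lprod B t i j'|) (fun k _ => abs_nonneg _) (Finset.mem_univ j)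
    refine hentry.trans (hrow.trans ?_)
    refine mul_le_mul_of_nonneg_right ?_ (pow_nonneg hq0 _)
    exact pow_le_pow_right₀ hl (Nat.mod_lt t hT).le
  -- tendsto
  have hdiv : Tendsto (fun t : ℕ => t / T) atTop atTop := by
    refine tendsto_atTop_atTop.mpr fun b => ⟨b * T, fun t ht => ?_⟩
    exact (Nat.le_div_iff_mul_le hT).mpr ht
  have hpow : Tendsto (fun γ : ℕ => q ^ γ) atTop (𝓝 0) :=
    tendsto_pow_atTop_nhds_zero_of_lt_one hq0 hlt
  have hg : Tendsto (fun t : ℕ => l ^ T * q ^ (t / T)) atTop (𝓝 0) := by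
    have := (hpow.comp hdiv).const_mul (l ^ T)
    simpa using this
  refine squeeze_zero_norm (fun t => ?_) hg
  simpa using hbound t
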